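/- Let matrices B_t and J_t in ℝ^{n×n} and vectors s_t satisfy B_{t+1} = AAA(B_t, J_t, s_t) for t = k, …, k+j, where each s_t is a standard basis vector maximizing ‖(B_t − J_t) e‖ over the standard basis e_1, …, e_n (the greedy choice). Suppose 0 ≤ i < j and s_{k+i} = s_{k+j}. Then for any matrix A ∈ ℝ^{n×n}, ‖B_{k+j} − A‖_F ≤ √n · Σ_{t=k+i}^{k+j−1} ‖(J_t − A) s_{k+i}‖ + 2√n · ‖J_{k+j} − A‖_F ≤ √n · Σ_{t=k+i}^{k+j−1} ‖J_t − A‖_F + 2√n · ‖J_{k+j} − A‖_F. -/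

import Mathlib

open Matrix MeasureTheory ProbabilityTheory Finset

/-- Euclidean norm of a vector in ℝⁿ. -/
noncomputable def enorm' {n : ℕ} (v : Fin n → ℝ) : ℝ := Real.sqrt (∑ i, (v i) ^ 2)

/-- Frobenius norm of a real n×n matrix. -/
noncomputable def frob {n : ℕ} (A : Matrix (Fin n) (Fin n) ℝ) : ℝ :=
  Real.sqrt (∑ i, ∑ j, (A i j) ^ 2)

/-- Spectral (ℓ₂ operator) norm of a real n×n matrix. -/
noncomputable def opNorm' {n : ℕ} (A : Matrix (Fin n) (Fin n) ℝ) : ℝ :=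
  ‖Matrix.toEuclideanCLM (𝕜 := ℝ) A‖

/-- The AAA update: AAA(B,J,s) = B + ((J−B) s sᵀ (J−B)ᵀ / (sᵀ(J−B)ᵀ(J−B)s)) (J−B)
if (J−B)s ≠ 0, and B otherwise. -/
noncomputable def AAAupd {n : ℕ} (B J : Matrix (Fin n) (Fin n) ℝ) (s : Fin n → ℝ) :
    Matrix (Fin n) (Fin n) ℝ :=
  if (J - B).mulVec s = 0 then B
  else B + (((J - B).mulVec s) ⬝ᵥ ((J - B).mulVec s))⁻¹ •
      (Matrix.vecMulVec ((J - B).mulVec s) ((J - B).mulVec s) * (J - B))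

/-- `s` is a standard basis vector maximizing ‖R e_i‖ over the standard basis. -/
noncomputable def IsGreedy {n : ℕ} (R : Matrix (Fin n) (Fin n) ℝ) (s : Fin n → ℝ) : Prop :=
  ∃ i : Fin n, s = Pi.single i 1 ∧
    ∀ j : Fin n, enorm' (R.mulVec (Pi.single j 1)) ≤ enorm' (R.mulVec (Pi.single i 1))

/-- `P` is the orthogonal-projection matrix onto the subspace `V` of ℝⁿ
(symmetric, idempotent, range `V`, identity on `V`). -/
def IsOrthProj {n : ℕ} (P : Matrix (Fin n) (Fin n) ℝ) (V : Submodule ℝ (Fin n → ℝ)) : Prop :=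
  P.IsSymm ∧ P * P = P ∧ (∀ v, P.mulVec v ∈ V) ∧ (∀ v ∈ V, P.mulVec v = v)

/-- Standard Gaussian measure on ℝⁿ: the n-fold product of N(0,1). -/
noncomputable def stdGaussianPi (n : ℕ) : MeasureTheory.Measure (Fin n → ℝ) :=
  MeasureTheory.Measure.pi fun _ => ProbabilityTheory.gaussianReal 0 1

/-! ### Auxiliary lemmas -/

section Aux

variable {n : ℕ}

/-- View a vector in `Fin n → ℝ` as a point of Euclidean space. -/
noncomputable def toES {n : ℕ} (v : Fin n → ℝ) : EuclideanSpace ℝ (Fin n) :=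
  (WithLp.equiv 2 _).symm v

lemma enorm'_eq_norm (v : Fin n → ℝ) : enorm' v = ‖toES v‖ := by
  rw [EuclideanSpace.norm_eq, enorm']
  congr 1
  exact Finset.sum_congr rfl fun i _ => by rw [Real.norm_eq_abs, sq_abs]; rfl

lemma enorm'_nonneg (v : Fin n → ℝ) : 0 ≤ enorm' v := Real.sqrt_nonneg _

lemma toES_add (u v : Fin n → ℝ) : toES (u + v) = toES u + toES v := rfl
lemma toES_sub (u v : Fin n → ℝ) : toES (u - v) = toES u - toES v := rfl
lemma toES_smul (c : ℝ) (u : Fin n → ℝ) : toES (c • u) = c • toES u := rfl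

lemma enorm'_add_le (u v : Fin n → ℝ) : enorm' (u + v) ≤ enorm' u + enorm' v := by
  rw [enorm'_eq_norm, enorm'_eq_norm, enorm'_eq_norm, toES_add]
  exact norm_add_le _ _

lemma enorm'_sub_le (u v : Fin n → ℝ) : enorm' (u - v) ≤ enorm' u + enorm' v := by
  rw [enorm'_eq_norm, enorm'_eq_norm, enorm'_eq_norm, toES_sub]
  exact norm_sub_le _ _

lemma inner_toES (u v : Fin n → ℝ) : (inner ℝ (toES u) (toES v) : ℝ) = u ⬝ᵥ v := by
  simp [toES, PiLp.inner_apply, RCLike.inner_apply, dotProduct, mul_comm]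

/-- Norm of the projection of `z` onto the line spanned by `u`. -/
lemma proj_norm_le {E : Type*} [NormedAddCommGroup E] [InnerProductSpace ℝ E]
    (u z : E) (hu : u ≠ 0) :
    ‖(((inner ℝ u u : ℝ))⁻¹ * (inner ℝ u z : ℝ)) • u‖ ≤ ‖z‖ := by
  have hun : (0:ℝ) < ‖u‖ := norm_pos_iff.mpr hu
  rw [norm_smul, Real.norm_eq_abs, abs_mul, abs_inv, real_inner_self_eq_norm_sq,
    abs_of_nonneg (by positivity)]
  have h := abs_real_inner_le_norm u z
  have : (‖u‖ ^ 2)⁻¹ * |(inner ℝ u z : ℝ)| * ‖u‖ ≤ (‖u‖ ^ 2)⁻¹ * (‖u‖ * ‖z‖) * ‖u‖ := by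
    gcongr
  refine this.trans (le_of_eq ?_)
  field_simp

/-- Norm of the component of `w` orthogonal to `u`. -/
lemma perp_norm_le {E : Type*} [NormedAddCommGroup E] [InnerProductSpace ℝ E]
    (u w : E) (hu : u ≠ 0) :
    ‖w - (((inner ℝ u u : ℝ))⁻¹ * (inner ℝ u w : ℝ)) • u‖ ≤ ‖w‖ := by
  have hun : (0:ℝ) < ‖u‖ := norm_pos_iff.mpr hu
  obtain ⟨a, ha⟩ : ∃ a : ℝ, (inner ℝ u w : ℝ) = a := ⟨_, rfl⟩
  have hself : (inner ℝ u u : ℝ) = ‖u‖ ^ 2 := real_inner_self_eq_norm_sq u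
  have hcomm : (inner ℝ w u : ℝ) = a := (real_inner_comm u w).trans ha
  rw [ha, hself]
  set c : ℝ := (‖u‖ ^ 2)⁻¹ * a with hc
  have hsq : ‖w - c • u‖ ^ 2 ≤ ‖w‖ ^ 2 := by
    rw [norm_sub_sq_real, inner_smul_right, hcomm, norm_smul, Real.norm_eq_abs, mul_pow, sq_abs]
    have hN : (‖u‖:ℝ) ^ 2 ≠ 0 := by positivity
    have h1 : c ^ 2 * ‖u‖ ^ 2 = c * a := by rw [hc]; field_simp
    have h2 : (0:ℝ) ≤ c * a := by
      have h3 : c * a = a ^ 2 * ((‖u‖ ^ 2)⁻¹) := by rw [hc]; ring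
      rw [h3]; positivity
    linarith
  exact le_of_pow_le_pow_left₀ two_ne_zero (norm_nonneg w) hsq

lemma enorm'_proj_le (u z : Fin n → ℝ) (hu : u ≠ 0) :
    enorm' (((u ⬝ᵥ u)⁻¹ * (u ⬝ᵥ z)) • u) ≤ enorm' z := by
  have hu' : toES u ≠ 0 := fun h => hu (funext fun i => congrFun (congrArg (WithLp.equiv 2 (Fin n → ℝ)) h) i)
  rw [enorm'_eq_norm, enorm'_eq_norm, toES_smul, ← inner_toES, ← inner_toES]
  exact proj_norm_le _ _ hu'

lemma enorm'_perp_le (u w : Fin n → ℝ) (hu : u ≠ 0) :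
    enorm' (w - ((u ⬝ᵥ u)⁻¹ * (u ⬝ᵥ w)) • u) ≤ enorm' w := by
  have hu' : toES u ≠ 0 := fun h => hu (funext fun i => congrFun (congrArg (WithLp.equiv 2 (Fin n → ℝ)) h) i)
  rw [enorm'_eq_norm, enorm'_eq_norm, toES_sub, toES_smul, ← inner_toES, ← inner_toES]
  exact perp_norm_le _ _ hu'

/-- Matrix version of Euclidean space on `Fin n × Fin n`. -/
noncomputable def toESM {n : ℕ} (A : Matrix (Fin n) (Fin n) ℝ) :
    EuclideanSpace ℝ (Fin n × Fin n) :=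
  (WithLp.equiv 2 _).symm (fun p => A p.1 p.2)

lemma frob_eq_norm (A : Matrix (Fin n) (Fin n) ℝ) : frob A = ‖toESM A‖ := by
  rw [EuclideanSpace.norm_eq, frob]
  congr 1
  rw [Fintype.sum_prod_type]
  exact Finset.sum_congr rfl fun i _ => Finset.sum_congr rfl fun j _ => by
    rw [Real.norm_eq_abs, sq_abs]; rfl

lemma frob_nonneg (A : Matrix (Fin n) (Fin n) ℝ) : 0 ≤ frob A := Real.sqrt_nonneg _

lemma frob_sub_le (X Y A : Matrix (Fin n) (Fin n) ℝ) :
    frob (X - A) ≤ frob (X - Y) + frob (Y - A) := by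
  have h : X - A = (X - Y) + (Y - A) := by abel
  rw [h, frob_eq_norm, frob_eq_norm, frob_eq_norm]
  exact norm_add_le (toESM (X - Y)) (toESM (Y - A))

lemma col_le_frob (A : Matrix (Fin n) (Fin n) ℝ) (m : Fin n) :
    enorm' (A.mulVec (Pi.single m 1)) ≤ frob A := by
  rw [enorm', frob]
  apply Real.sqrt_le_sqrt
  simp only [Matrix.mulVec_single, Pi.smul_apply, op_smul_eq_mul, Matrix.col_apply, mul_one]
  exact Finset.sum_le_sum fun i _ =>
    Finset.single_le_sum (fun j _ => sq_nonneg (A i j)) (Finset.mem_univ m)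

lemma frob_le_sqrt_mul (A : Matrix (Fin n) (Fin n) ℝ) (c : ℝ) (hc : 0 ≤ c)
    (h : ∀ m : Fin n, enorm' (A.mulVec (Pi.single m 1)) ≤ c) :
    frob A ≤ Real.sqrt n * c := by
  have hcol : ∀ m : Fin n, ∑ i, (A i m) ^ 2 ≤ c ^ 2 := by
    intro m
    have hm := h m
    rw [enorm'] at hm
    simp only [Matrix.mulVec_single, Pi.smul_apply, op_smul_eq_mul, Matrix.col_apply, mul_one] at hm
    have h0 : (0:ℝ) ≤ ∑ i, (A i m) ^ 2 := Finset.sum_nonneg fun _ _ => sq_nonneg _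
    calc ∑ i, (A i m) ^ 2 = Real.sqrt (∑ i, (A i m) ^ 2) ^ 2 := (Real.sq_sqrt h0).symm
      _ ≤ c ^ 2 := pow_le_pow_left₀ (Real.sqrt_nonneg _) hm 2
  rw [frob]
  calc Real.sqrt (∑ i, ∑ j, (A i j) ^ 2)
      = Real.sqrt (∑ j, ∑ i, (A i j) ^ 2) := by rw [Finset.sum_comm]
    _ ≤ Real.sqrt (∑ _j : Fin n, c ^ 2) :=
        Real.sqrt_le_sqrt (Finset.sum_le_sum fun j _ => hcol j)
    _ = Real.sqrt ((n : ℝ) * c ^ 2) := by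
        rw [Finset.sum_const, Finset.card_univ, Fintype.card_fin, nsmul_eq_mul]
    _ = Real.sqrt n * c := by
        rw [Real.sqrt_mul (by positivity), Real.sqrt_sq hc]

lemma vecMulVec_mulVec' (u v x : Fin n → ℝ) :
    (Matrix.vecMulVec u v).mulVec x = (v ⬝ᵥ x) • u := by
  ext i
  simp [Matrix.mulVec, Matrix.vecMulVec_apply, dotProduct, Finset.sum_mul,
    Finset.mul_sum, mul_comm, mul_assoc, mul_left_comm]

lemma AAAupd_mulVec (Bm J : Matrix (Fin n) (Fin n) ℝ) (st w : Fin n → ℝ)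
    (h : (J - Bm).mulVec st ≠ 0) :
    (AAAupd Bm J st).mulVec w =
      Bm.mulVec w + ((((J - Bm).mulVec st) ⬝ᵥ ((J - Bm).mulVec st))⁻¹ *
        (((J - Bm).mulVec st) ⬝ᵥ ((J - Bm).mulVec w))) • ((J - Bm).mulVec st) := by
  rw [AAAupd, if_neg h, Matrix.add_mulVec, Matrix.smul_mulVec,
    ← Matrix.mulVec_mulVec, vecMulVec_mulVec', smul_smul]

lemma AAAupd_mulVec_self (Bm J : Matrix (Fin n) (Fin n) ℝ) (st : Fin n → ℝ) :
    (AAAupd Bm J st).mulVec st = J.mulVec st := by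
  by_cases h : (J - Bm).mulVec st = 0
  · rw [AAAupd, if_pos h]
    rw [Matrix.sub_mulVec, sub_eq_zero] at h
    exact h.symm
  · rw [AAAupd_mulVec _ _ _ _ h]
    have hne : ((J - Bm).mulVec st) ⬝ᵥ ((J - Bm).mulVec st) ≠ 0 := by
      rwa [Ne, dotProduct_self_eq_zero]
    rw [inv_mul_cancel₀ hne, one_smul, Matrix.sub_mulVec]
    abel

lemma AAAupd_step (Bm J A : Matrix (Fin n) (Fin n) ℝ) (st sv : Fin n → ℝ) :
    enorm' ((AAAupd Bm J st - A).mulVec sv) ≤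
      enorm' ((Bm - A).mulVec sv) + enorm' ((J - A).mulVec sv) := by
  by_cases h : (J - Bm).mulVec st = 0
  · rw [AAAupd, if_pos h]
    exact le_add_of_nonneg_right (enorm'_nonneg _)
  · set u := (J - Bm).mulVec st with hu
    set w := (Bm - A).mulVec sv with hw
    set z := (J - A).mulVec sv with hz
    have hDz : (J - Bm).mulVec sv = z - w := by
      rw [hz, hw, Matrix.sub_mulVec, Matrix.sub_mulVec, Matrix.sub_mulVec]
      abel
    have hexp : (AAAupd Bm J st - A).mulVec sv =
        (w - ((u ⬝ᵥ u)⁻¹ * (u ⬝ᵥ w)) • u) + ((u ⬝ᵥ u)⁻¹ * (u ⬝ᵥ z)) • u := by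
      rw [Matrix.sub_mulVec, AAAupd_mulVec _ _ _ _ h, ← hu, hDz, dotProduct_sub]
      have hw' : Bm.mulVec sv - A.mulVec sv = w := by rw [hw, Matrix.sub_mulVec]
      rw [add_sub_right_comm, hw', mul_sub, sub_smul]
      abel
    rw [hexp]
    refine (enorm'_add_le _ _).trans (add_le_add ?_ ?_)
    · exact enorm'_perp_le u w h
    · exact enorm'_proj_le u z h

end Aux

theorem stmt_19 {n : ℕ} (B Jm : ℕ → Matrix (Fin n) (Fin n) ℝ) (s : ℕ → Fin n → ℝ)
    (k i j : ℕ) (hij : i < j)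
    (hupd : ∀ t, k ≤ t → t ≤ k + j → B (t + 1) = AAAupd (B t) (Jm t) (s t))
    (hgreedy : ∀ t, k ≤ t → t ≤ k + j → IsGreedy (B t - Jm t) (s t))
    (hss : s (k + i) = s (k + j))
    (A : Matrix (Fin n) (Fin n) ℝ) :
    frob (B (k + j) - A) ≤
      Real.sqrt n * (∑ t ∈ Finset.Ico (k + i) (k + j), enorm' ((Jm t - A).mulVec (s (k + i)))) +
        2 * Real.sqrt n * frob (Jm (k + j) - A) ∧
    Real.sqrt n * (∑ t ∈ Finset.Ico (k + i) (k + j), enorm' ((Jm t - A).mulVec (s (k + i)))) +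
        2 * Real.sqrt n * frob (Jm (k + j) - A) ≤
      Real.sqrt n * (∑ t ∈ Finset.Ico (k + i) (k + j), frob (Jm t - A)) +
        2 * Real.sqrt n * frob (Jm (k + j) - A) := by
  rcases Nat.eq_zero_or_pos n with h0 | h0
  · subst h0
    constructor <;> simp [frob, enorm', Finset.univ_eq_empty]
  -- n ≥ 1
  obtain ⟨m, hm, hmax⟩ := hgreedy (k + j) (Nat.le_add_right _ _) le_rfl
  have he : s (k + i) = Pi.single m 1 := hss.trans hm
  -- the key induction
  have key : ∀ t, k + i + 1 ≤ t → t ≤ k + j →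
      enorm' ((B t - A).mulVec (s (k + i))) ≤
        ∑ τ ∈ Finset.Ico (k + i) t, enorm' ((Jm τ - A).mulVec (s (k + i))) := by
    intro t ht
    induction t, ht using Nat.le_induction with
    | base =>
      intro _
      have hB : B (k + i + 1) = AAAupd (B (k + i)) (Jm (k + i)) (s (k + i)) :=
        hupd (k + i) (Nat.le_add_right _ _) (by omega)
      rw [Nat.Ico_succ_singleton, Finset.sum_singleton, hB, Matrix.sub_mulVec,
        AAAupd_mulVec_self, ← Matrix.sub_mulVec]
    | succ t ht IH =>
      intro htop
      have hB : B (t + 1) = AAAupd (B t) (Jm t) (s t) := hupd t (by omega) (by omega)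
      rw [hB, Finset.sum_Ico_succ_top (by omega : k + i ≤ t)]
      exact (AAAupd_step _ _ _ _ _).trans (add_le_add_left (IH (by omega)) _)
  have hkey := key (k + j) (by omega) le_rfl
  set S := ∑ t ∈ Finset.Ico (k + i) (k + j), enorm' ((Jm t - A).mulVec (s (k + i))) with hS
  set F := frob (Jm (k + j) - A) with hF
  have hF0 : 0 ≤ F := frob_nonneg _
  have hS0 : 0 ≤ S := Finset.sum_nonneg fun _ _ => enorm'_nonneg _
  have hsqrt1 : (1:ℝ) ≤ Real.sqrt n := by
    rw [show (1:ℝ) = Real.sqrt 1 from Real.sqrt_one.symm]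
    exact Real.sqrt_le_sqrt (by exact_mod_cast h0)
  have hsqrt0 : (0:ℝ) ≤ Real.sqrt n := Real.sqrt_nonneg _
  constructor
  · -- first inequality
    have h1 : frob (B (k + j) - A) ≤ frob (B (k + j) - Jm (k + j)) + F :=
      frob_sub_le _ _ _
    have h3 : enorm' ((B (k + j) - Jm (k + j)).mulVec (Pi.single m 1)) ≤
        enorm' ((B (k + j) - A).mulVec (Pi.single m 1)) +
          enorm' ((Jm (k + j) - A).mulVec (Pi.single m 1)) := by
      have hd : B (k + j) - Jm (k + j) = (B (k + j) - A) - (Jm (k + j) - A) := by abel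
      rw [hd, Matrix.sub_mulVec]
      exact enorm'_sub_le _ _
    have h4 : enorm' ((B (k + j) - A).mulVec (Pi.single m 1)) ≤ S := by
      rw [← he]; exact hkey
    have h5 : enorm' ((Jm (k + j) - A).mulVec (Pi.single m 1)) ≤ F := col_le_frob _ m
    have h2 : frob (B (k + j) - Jm (k + j)) ≤
        Real.sqrt n * enorm' ((B (k + j) - Jm (k + j)).mulVec (Pi.single m 1)) := by
      refine frob_le_sqrt_mul _ _ (enorm'_nonneg _) ?_
      intro m'
      exact hmax m'
    have hc : enorm' ((B (k + j) - Jm (k + j)).mulVec (Pi.single m 1)) ≤ S + F :=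
      h3.trans (add_le_add h4 h5)
    have hFsq : F ≤ Real.sqrt n * F := le_mul_of_one_le_left hF0 hsqrt1
    calc frob (B (k + j) - A)
        ≤ Real.sqrt n * (S + F) + F := by
          refine h1.trans (add_le_add_left (h2.trans ?_) _)
          exact mul_le_mul_of_nonneg_left hc hsqrt0
      _ ≤ Real.sqrt n * S + 2 * Real.sqrt n * F := by nlinarith
  · -- second inequality
    refine add_le_add_left (mul_le_mul_of_nonneg_left ?_ hsqrt0) _
    refine Finset.sum_le_sum fun t _ => ?_
    rw [he]
    exact col_le_frob _ m
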